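/- Let G be a finite simple graph in which any two distinct vertices of degree 1 are at distance at least 5 (no walk of length at most 4 joins them). Let S be a vdp-cover of G satisfying property (B5): whenever P_i ∈ S is a dangling path, x is an out-endpoint of P_i, y is a neighbor of x lying on a 2-path P_j ∈ S with P_j ≠ P_i, and P_j = P_j′ y P_j″ is the decomposition of P_j at y, then either one of P_j′, P_j″ is a dangling path, or |P_j| ∈ {11, 17} and |P_j′| = |P_j″|. Then for every 2-path P ∈ S that has a neighboring dangling path of S (a dangling path Q ∈ S, Q ≠ P, some vertex of which is adjacent in G to some vertex of P), one has |P| ∈ {11, 17} and P has exactly one neighboring dangling path of S. -/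

import Mathlib

/-- A path of `G`, modelled as a nonempty duplicate-free list of vertices whose
consecutive entries are adjacent. Its order (number of vertices) is `l.length`;
it is an `i`-path when `l.length % 3 = i`. -/
def IsPathList {V : Type*} (G : SimpleGraph V) (l : List V) : Prop :=
  l ≠ [] ∧ l.Nodup ∧ l.Chain' G.Adj

/-- A vdp-cover of `G`: a set of pairwise vertex-disjoint paths covering all vertices. -/
def VdpCover {V : Type*} (G : SimpleGraph V) (S : Finset (List V)) : Prop :=
  (∀ l ∈ S, IsPathList G l) ∧
  (∀ l ∈ S, ∀ l' ∈ S, l ≠ l' → ∀ x : V, x ∈ l → x ∉ l') ∧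
  (∀ v : V, ∃ l ∈ S, v ∈ l)

/-- `x` is an endpoint of the path `l`. -/
def IsEndpoint {V : Type*} (l : List V) (x : V) : Prop :=
  l.head? = some x ∨ l.getLast? = some x

/-- `x` is an out-endpoint of the path `l`: an endpoint with a neighbor outside `l`. -/
def IsOutEndpoint {V : Type*} (G : SimpleGraph V) (l : List V) (x : V) : Prop :=
  IsEndpoint l x ∧ ∃ z : V, z ∉ l ∧ G.Adj x z

/-- A dangling path of `G`: a path of order two exactly one of whose endpoints has
degree 1 in `G`. -/
def Dangling {V : Type*} [Fintype V] (G : SimpleGraph V) [DecidableRel G.Adj]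
    (l : List V) : Prop :=
  ∃ u w : V, l = [u, w] ∧ G.Adj u w ∧
    ((G.degree u = 1 ∧ G.degree w ≠ 1) ∨ (G.degree u ≠ 1 ∧ G.degree w = 1))

/-- Suppose distinct degree-1 vertices of `G` are at distance at least 5 (no walk of
length at most 4 joins them), and `S` is a vdp-cover of `G` satisfying property (B5):
whenever `Pi ∈ S` is dangling with out-endpoint `x`, and `y` is a neighbor of `x` on a
2-path `Pj = P' ++ y :: P''` of `S` with `Pj ≠ Pi`, then one of `P'`, `P''` is
dangling, or `|Pj| ∈ {11, 17}` and `|P'| = |P''|`. Then every 2-path `P ∈ S` with a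
neighboring dangling path of `S` has order 11 or 17 and has exactly one neighboring
dangling path of `S`. -/

private lemma deg_one_adj_eq {V : Type*} [Fintype V] [DecidableEq V]
    (G : SimpleGraph V) [DecidableRel G.Adj] {d x z : V}
    (hd : G.degree d = 1) (h1 : G.Adj d x) (h2 : G.Adj d z) : x = z := by
  obtain ⟨c, hc⟩ := Finset.card_eq_one.mp hd
  have hx : x ∈ G.neighborFinset d := by rwa [SimpleGraph.mem_neighborFinset]
  have hz : z ∈ G.neighborFinset d := by rwa [SimpleGraph.mem_neighborFinset]
  rw [hc, Finset.mem_singleton] at hx hz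
  rw [hx, hz]

private lemma extract_dangling {V : Type*} [Fintype V] [DecidableEq V]
    (G : SimpleGraph V) [DecidableRel G.Adj] {Q : List V} {u w : V}
    (hQd : Dangling G Q) (hu : u ∈ Q) (hw : w ∉ Q) (hadj : G.Adj u w) :
    ∃ d x : V, d ∈ Q ∧ G.degree d = 1 ∧ G.Adj d x ∧ G.Adj x w ∧ IsOutEndpoint G Q x := by
  obtain ⟨a, b, rfl, hab, hcase⟩ := hQd
  have humem : u = a ∨ u = b := by simpa using hu
  rcases hcase with ⟨ha, hb⟩ | ⟨ha, hb⟩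
  · -- deg a = 1
    have hub : u = b := by
      rcases humem with rfl | rfl
      · exact absurd (by simp [← deg_one_adj_eq G ha hab hadj]) hw
      · rfl
    subst hub
    exact ⟨a, u, by simp, ha, hab, hadj, Or.inr (by simp), w, hw, hadj⟩
  · -- deg b = 1
    have hua : u = a := by
      rcases humem with rfl | rfl
      · rfl
      · exact absurd (by simp [← deg_one_adj_eq G hb hab.symm hadj]) hw
    subst hua
    exact ⟨b, u, by simp, hb, hab.symm, hadj, Or.inl rfl, w, hw, hadj⟩

private lemma key_lemma {V : Type*} [Fintype V] [DecidableEq V]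
    (G : SimpleGraph V) [DecidableRel G.Adj]
    (hdist : ∀ u v : V, u ≠ v → G.degree u = 1 → G.degree v = 1 →
      ∀ p : G.Walk u v, 5 ≤ p.length)
    (S : Finset (List V)) (hS : VdpCover G S)
    (hB5 : ∀ Pi ∈ S, Dangling G Pi →
      ∀ x : V, IsOutEndpoint G Pi x →
      ∀ Pj ∈ S, Pj ≠ Pi → Pj.length % 3 = 2 →
      ∀ y ∈ Pj, G.Adj x y →
      ∀ P' P'' : List V, Pj = P' ++ y :: P'' →
        Dangling G P' ∨ Dangling G P'' ∨
        ((Pj.length = 11 ∨ Pj.length = 17) ∧ P'.length = P''.length))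
    (P : List V) (hPS : P ∈ S) (hP2 : P.length % 3 = 2)
    (Q : List V) (hQS : Q ∈ S) (hQne : Q ≠ P) (hQd : Dangling G Q)
    (u : V) (hu : u ∈ Q) (w : V) (hw : w ∈ P) (hadj : G.Adj u w) :
    (P.length = 11 ∨ P.length = 17) ∧ 2 * P.idxOf w + 1 = P.length ∧
    ∃ d x : V, d ∈ Q ∧ G.degree d = 1 ∧ G.Adj d x ∧ G.Adj x w := by
  have hwQ : w ∉ Q := hS.2.1 P hPS Q hQS (Ne.symm hQne) w hw
  obtain ⟨d, x, hdQ, hddeg, hdx, hxw, hxout⟩ := extract_dangling G hQd hu hwQ hadj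
  have hi : P.idxOf w < P.length := List.idxOf_lt_length_iff.mpr hw
  have hdec : P = P.take (P.idxOf w) ++ w :: P.drop (P.idxOf w + 1) := by
    conv_lhs => rw [← List.take_append_drop (P.idxOf w) P]
    rw [List.drop_eq_getElem_cons hi, List.getElem_idxOf hi]
  have hchain : P.Chain' G.Adj := (hS.1 P hPS).2.2
  have hdP : d ∉ P := hS.2.1 Q hQS P hPS hQne d hdQ
  have hB := hB5 Q hQS hQd x hxout P hPS (Ne.symm hQne) hP2 w hw hxw
    (P.take (P.idxOf w)) (P.drop (P.idxOf w + 1)) hdec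
  rcases hB with hD | hD | ⟨h11, heq⟩
  · exfalso
    obtain ⟨p, q, hpq, hpqadj, hdeg⟩ := hD
    have hP5 : P = p :: q :: w :: P.drop (P.idxOf w + 1) := by
      rw [hpq] at hdec; simpa using hdec
    have hch := hchain
    rw [hP5] at hch
    simp only [List.Chain', List.isChain_cons_cons] at hch
    obtain ⟨h1, h2, -⟩ := hch
    rcases hdeg with ⟨hp1, -⟩ | ⟨-, hq1⟩
    · have hpP : p ∈ P := by rw [hP5]; simp
      have hne : d ≠ p := fun h => hdP (h ▸ hpP)
      have := hdist d p hne hddeg hp1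
        (.cons hdx (.cons hxw (.cons h2.symm (.cons h1.symm .nil))))
      simp [SimpleGraph.Walk.length_cons, SimpleGraph.Walk.length_nil] at this
    · have hqP : q ∈ P := by rw [hP5]; simp
      have hne : d ≠ q := fun h => hdP (h ▸ hqP)
      have := hdist d q hne hddeg hq1 (.cons hdx (.cons hxw (.cons h2.symm .nil)))
      simp [SimpleGraph.Walk.length_cons, SimpleGraph.Walk.length_nil] at this
  · exfalso
    obtain ⟨p, q, hpq, hpqadj, hdeg⟩ := hD
    have hP6 : P = P.take (P.idxOf w) ++ [w, p, q] := by
      rw [hpq] at hdec; exact hdec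
    have hch := hchain
    rw [hP6] at hch; simp only [List.Chain'] at hch; rw [List.isChain_append] at hch
    obtain ⟨-, hc2, -⟩ := hch
    simp only [List.isChain_cons_cons] at hc2
    obtain ⟨h1, h2, -⟩ := hc2
    rcases hdeg with ⟨hp1, -⟩ | ⟨-, hq1⟩
    · have hpP : p ∈ P := by rw [hP6]; simp
      have hne : d ≠ p := fun h => hdP (h ▸ hpP)
      have := hdist d p hne hddeg hp1 (.cons hdx (.cons hxw (.cons h1 .nil)))
      simp [SimpleGraph.Walk.length_cons, SimpleGraph.Walk.length_nil] at this
    · have hqP : q ∈ P := by rw [hP6]; simp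
      have hne : d ≠ q := fun h => hdP (h ▸ hqP)
      have := hdist d q hne hddeg hq1 (.cons hdx (.cons hxw (.cons h1 (.cons h2 .nil))))
      simp [SimpleGraph.Walk.length_cons, SimpleGraph.Walk.length_nil] at this
  · refine ⟨h11, ?_, d, x, hdQ, hddeg, hdx, hxw⟩
    have hlen := heq
    simp only [List.length_take, List.length_drop] at hlen
    omega

theorem two_path_neighboring_dangling {V : Type*} [Fintype V] [DecidableEq V]
    (G : SimpleGraph V) [DecidableRel G.Adj]
    (hdist : ∀ u v : V, u ≠ v → G.degree u = 1 → G.degree v = 1 →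
      ∀ p : G.Walk u v, 5 ≤ p.length)
    (S : Finset (List V)) (hS : VdpCover G S)
    (hB5 : ∀ Pi ∈ S, Dangling G Pi →
      ∀ x : V, IsOutEndpoint G Pi x →
      ∀ Pj ∈ S, Pj ≠ Pi → Pj.length % 3 = 2 →
      ∀ y ∈ Pj, G.Adj x y →
      ∀ P' P'' : List V, Pj = P' ++ y :: P'' →
        Dangling G P' ∨ Dangling G P'' ∨
        ((Pj.length = 11 ∨ Pj.length = 17) ∧ P'.length = P''.length)) :
    ∀ P ∈ S, P.length % 3 = 2 →
      (∃ Q ∈ S, Q ≠ P ∧ Dangling G Q ∧ ∃ u ∈ Q, ∃ w ∈ P, G.Adj u w) →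
      (P.length = 11 ∨ P.length = 17) ∧
      (∃! Q : List V, Q ∈ S ∧ Q ≠ P ∧ Dangling G Q ∧
        ∃ u ∈ Q, ∃ w ∈ P, G.Adj u w) := by
  intro P hPS hP2 hex
  obtain ⟨Q, hQS, hQne, hQd, u, hu, w, hw, hadj⟩ := hex
  obtain ⟨h11, hidx, d, xx, hdQ, hddeg, hdx, hxw⟩ :=
    key_lemma G hdist S hS hB5 P hPS hP2 Q hQS hQne hQd u hu w hw hadj
  refine ⟨h11, Q, ⟨hQS, hQne, hQd, u, hu, w, hw, hadj⟩, ?_⟩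
  rintro Q' ⟨hQ'S, hQ'ne, hQ'd, u', hu', w', hw', hadj'⟩
  obtain ⟨-, hidx', d', x', hd'Q, hd'deg, hd'x, hx'w⟩ :=
    key_lemma G hdist S hS hB5 P hPS hP2 Q' hQ'S hQ'ne hQ'd u' hu' w' hw' hadj'
  by_contra hne
  have hw'w : w' = w := (List.idxOf_inj hw').mp (by omega)
  subst hw'w
  have hd'Qn : d' ∉ Q := hS.2.1 Q' hQ'S Q hQS hne d' hd'Q
  have hdne : d' ≠ d := fun h => hd'Qn (h ▸ hdQ)
  have := hdist d' d hdne hd'deg hddeg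
    (.cons hd'x (.cons hx'w (.cons hxw.symm (.cons hdx.symm .nil))))
  simp [SimpleGraph.Walk.length_cons, SimpleGraph.Walk.length_nil] at this
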